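/- Lazy modular reduction is correct: for any nonnegative integer x, letting x' = (x mod 2^{128}) ⊕ ((x div 2^{128}) ⋆ 4) ⊕ ((x div 2^{128}) ⋆ 2), we have x' mod (2^{127} + 2 + 1) = x mod (2^{127} + 2 + 1), where all operations are carry-less and + in the modulus denotes ordinary addition of powers of two (i.e., the modulus is the integer 2^{127} ⊕ 2 ⊕ 1). -/

import Mathlib

/-- Carry-less multiplication: `(a ⋆ b)ᵢ = ⨁ₖ a_{i-k} bₖ`. -/
def clmul : ℕ → ℕ → ℕ
  | 0, _ => 0
  | a + 1, b => (if (a + 1) % 2 = 1 then b else 0) ^^^ 2 * clmul ((a + 1) / 2) b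
termination_by a _ => a
decreasing_by simp_wf; omega

lemma clmul_zero (b : ℕ) : clmul 0 b = 0 := by simp [clmul]

lemma clmul_unfold (a b : ℕ) (h : a ≠ 0) :
    clmul a b = (if a % 2 = 1 then b else 0) ^^^ 2 * clmul (a / 2) b := by
  obtain ⟨a', rfl⟩ := Nat.exists_eq_succ_of_ne_zero h
  rw [clmul]

lemma two_mul_xor (x y : ℕ) : 2 * (x ^^^ y) = 2 * x ^^^ 2 * y := by
  apply Nat.eq_of_testBit_eq
  intro i
  cases i with
  | zero => simp [Nat.mul_mod_right]
  | succ n =>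
    rw [Nat.testBit_add_one, Nat.testBit_add_one, Nat.xor_div_two,
      Nat.mul_div_cancel_left _ (by norm_num : (0:ℕ) < 2),
      Nat.mul_div_cancel_left _ (by norm_num : (0:ℕ) < 2),
      Nat.mul_div_cancel_left _ (by norm_num : (0:ℕ) < 2)]

lemma pow_mul_xor {k b : ℕ} (a : ℕ) (hb : b < 2 ^ k) : 2 ^ k * a ^^^ b = 2 ^ k * a + b := by
  apply Nat.eq_of_testBit_eq
  intro j
  rw [show 2 ^ k * a + b = 2 ^ k * a + b from rfl, Nat.testBit_two_pow_mul_add a hb]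
  simp only [Nat.testBit_xor, Nat.testBit_two_pow_mul]
  by_cases hj : j < k
  · simp [hj, Nat.not_le_of_lt hj]
  · have hbj : b < 2 ^ j := lt_of_lt_of_le hb (Nat.pow_le_pow_right (by norm_num) (le_of_not_gt hj))
    simp [hj, le_of_not_gt hj, Nat.testBit_lt_two_pow hbj]

lemma xor_left_comm (a b c : ℕ) : a ^^^ (b ^^^ c) = b ^^^ (a ^^^ c) := by
  rw [← Nat.xor_assoc, Nat.xor_comm a b, Nat.xor_assoc]

lemma clmul_xor_left (a b c : ℕ) : clmul (a ^^^ b) c = clmul a c ^^^ clmul b c := by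
  induction a using Nat.strong_induction_on generalizing b with
  | _ a ih =>
  rcases eq_or_ne a 0 with rfl | ha
  · simp [clmul_zero]
  rcases eq_or_ne b 0 with rfl | hb
  · simp [clmul_zero]
  rcases eq_or_ne (a ^^^ b) 0 with hab | hab
  · rw [xor_eq_zero_iff] at hab
    subst hab
    simp [clmul_zero]
  rw [clmul_unfold _ _ hab, clmul_unfold a _ ha, clmul_unfold b _ hb, Nat.xor_div_two,
    ih (a / 2) (by omega) (b / 2), two_mul_xor]
  have hm : (a ^^^ b) % 2 = (a + b) % 2 := Nat.xor_mod_two_eq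
  rcases Nat.mod_two_eq_zero_or_one a with h1 | h1 <;>
    rcases Nat.mod_two_eq_zero_or_one b with h2 | h2 <;>
    simp [h1, h2, Nat.add_mod, hm, Nat.xor_assoc, Nat.xor_comm, xor_left_comm,
      xor_cancel_left]

lemma clmul_xor_right (a b c : ℕ) : clmul a (b ^^^ c) = clmul a b ^^^ clmul a c := by
  induction a using Nat.strong_induction_on with
  | _ a ih =>
  rcases eq_or_ne a 0 with rfl | ha
  · simp [clmul_zero]
  rw [clmul_unfold a _ ha, clmul_unfold a b ha, clmul_unfold a c ha, ih (a / 2) (by omega),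
    two_mul_xor]
  rcases Nat.mod_two_eq_zero_or_one a with h1 | h1 <;>
    simp [h1, Nat.xor_assoc, Nat.xor_comm, xor_left_comm]

lemma clmul_two_mul_left (a b : ℕ) : clmul (2 * a) b = 2 * clmul a b := by
  rcases eq_or_ne a 0 with rfl | ha
  · simp [clmul_zero]
  rw [clmul_unfold (2 * a) b (by omega)]
  simp [Nat.mul_mod_right, Nat.mul_div_cancel_left _ (by norm_num : (0:ℕ) < 2)]

lemma clmul_one (b : ℕ) : clmul 1 b = b := by
  rw [clmul_unfold 1 b one_ne_zero]
  simp [clmul_zero]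

lemma clmul_two_mul_right (a b : ℕ) : clmul a (2 * b) = 2 * clmul a b := by
  induction a using Nat.strong_induction_on with
  | _ a ih =>
  rcases eq_or_ne a 0 with rfl | ha
  · simp [clmul_zero]
  rw [clmul_unfold a (2 * b) ha, clmul_unfold a b ha, ih (a / 2) (by omega), two_mul_xor]
  rcases Nat.mod_two_eq_zero_or_one a with h1 | h1 <;> simp [h1]

lemma clmul_pow_two_right (a k : ℕ) : clmul a (2 ^ k) = 2 ^ k * a := by
  induction k with
  | zero =>
    simp only [pow_zero, one_mul]
    induction a using Nat.strong_induction_on with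
    | _ a ih =>
    rcases eq_or_ne a 0 with rfl | ha
    · simp [clmul_zero]
    rw [clmul_unfold a 1 ha, ih (a / 2) (by omega)]
    have h2 : (if a % 2 = 1 then 1 else 0) < 2 ^ 1 := by split <;> norm_num
    rw [Nat.xor_comm, show (2 : ℕ) * (a / 2) = 2 ^ 1 * (a / 2) from by norm_num,
      pow_mul_xor _ h2]
    rcases Nat.mod_two_eq_zero_or_one a with h1 | h1 <;> simp [h1] <;> omega
  | succ n ihn =>
    rw [pow_succ, mul_comm (2 ^ n) 2, clmul_two_mul_right, ihn]
    ring

lemma clmul_bounds (a b : ℕ) (ha : a ≠ 0) (hb : b ≠ 0) :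
    2 ^ (Nat.log2 a + Nat.log2 b) ≤ clmul a b ∧
      clmul a b < 2 ^ (Nat.log2 a + Nat.log2 b + 1) := by
  induction a using Nat.strong_induction_on with
  | _ a ih =>
  rcases lt_or_ge a 2 with h2 | h2
  · have : a = 1 := by omega
    subst this
    rw [clmul_one]
    have h0 : Nat.log2 1 = 0 := by rw [Nat.log2_def]; simp
    rw [h0]
    exact ⟨by simpa using Nat.log2_self_le hb, by simpa using Nat.lt_log2_self⟩
  · have ha2 : a / 2 ≠ 0 := by omega
    obtain ⟨ih1, ih2⟩ := ih (a / 2) (by omega) ha2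
    have hlog : Nat.log2 a = Nat.log2 (a / 2) + 1 := by
      rw [Nat.log2_def]
      simp [h2]
    set L := Nat.log2 (a / 2) + Nat.log2 b with hL
    have hm1 : 2 ^ (L + 1) ≤ 2 * clmul (a / 2) b := by
      rw [pow_succ, mul_comm]
      omega
    have hm2 : 2 * clmul (a / 2) b < 2 ^ (L + 2) := by
      have : 2 ^ (L + 2) = 2 * 2 ^ (L + 1) := by ring
      omega
    have hc : (if a % 2 = 1 then b else 0) < 2 ^ (L + 1) := by
      split
      · exact lt_of_lt_of_le Nat.lt_log2_self (Nat.pow_le_pow_right (by norm_num) (by omega))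
      · positivity
    rw [clmul_unfold a b ha, hlog]
    have hgoalpow : Nat.log2 (a / 2) + 1 + Nat.log2 b = L + 1 := by omega
    rw [show Nat.log2 (a / 2) + 1 + Nat.log2 b = L + 1 from by omega]
    constructor
    · -- lower bound: bit L+1 of the xor is set
      apply Nat.ge_two_pow_of_testBit
      rw [Nat.testBit_xor, Nat.testBit_lt_two_pow hc, Bool.false_xor]
      rw [Nat.testBit_eq_decide_div_mod_eq]
      have hdiv : 2 * clmul (a / 2) b / 2 ^ (L + 1) = 1 := by
        have h1 : 1 ≤ 2 * clmul (a / 2) b / 2 ^ (L + 1) :=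
          (Nat.le_div_iff_mul_le (Nat.two_pow_pos _)).2 (by omega)
        have h2' : 2 * clmul (a / 2) b / 2 ^ (L + 1) < 2 := by
          apply Nat.div_lt_of_lt_mul
          have : 2 ^ (L + 2) = 2 ^ (L + 1) * 2 := by ring
          omega
        omega
      simp [hdiv]
    · exact Nat.xor_lt_two_pow (lt_trans hc (by
        exact Nat.pow_lt_pow_right (by norm_num) (by omega))) hm2

lemma p_val : (2 ^ 127 ^^^ 2 ^^^ 1 : ℕ) = 2 ^ 127 + 3 := by
  rw [show (2:ℕ) ^ 127 = 2 ^ 127 * 1 from by ring,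
    pow_mul_xor 1 (show (2:ℕ) < 2 ^ 127 from by norm_num),
    show (2:ℕ) ^ 127 * 1 + 2 = 2 ^ 1 * (2 ^ 126 + 1) from by ring,
    pow_mul_xor (2 ^ 126 + 1) (show (1:ℕ) < 2 ^ 1 from by norm_num)]
  ring

lemma p_log2 : Nat.log2 (2 ^ 127 ^^^ 2 ^^^ 1 : ℕ) = 127 := by
  rw [p_val]
  have h1 : 127 ≤ Nat.log2 (2 ^ 127 + 3) :=
    (Nat.le_log2 (by positivity)).2 (by omega)
  have h2 : Nat.log2 (2 ^ 127 + 3) < 128 :=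
    (Nat.log2_lt (by positivity)).2 (by norm_num)
  omega

lemma two_p_val : 2 * (2 ^ 127 ^^^ 2 ^^^ 1 : ℕ) = 2 ^ 128 ^^^ 4 ^^^ 2 := by
  rw [p_val,
    show (2:ℕ) ^ 128 = 2 ^ 128 * 1 from by ring,
    pow_mul_xor 1 (show (4:ℕ) < 2 ^ 128 from by norm_num),
    show (2:ℕ) ^ 128 * 1 + 4 = 2 ^ 2 * (2 ^ 126 + 1) from by ring,
    pow_mul_xor (2 ^ 126 + 1) (show (2:ℕ) < 2 ^ 2 from by norm_num)]
  ring

lemma clmod_xor_multiple (cldiv clmod : ℕ → ℕ → ℕ)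
    (hchar : ∀ a b : ℕ, b ≠ 0 →
      a = clmul (cldiv a b) b ^^^ clmod a b ∧ clmod a b < 2 ^ Nat.log2 b)
    (a k : ℕ) :
    clmod (a ^^^ clmul k (2 ^ 127 ^^^ 2 ^^^ 1)) (2 ^ 127 ^^^ 2 ^^^ 1) =
      clmod a (2 ^ 127 ^^^ 2 ^^^ 1) := by
  set p : ℕ := 2 ^ 127 ^^^ 2 ^^^ 1 with hpdef
  have hp : p ≠ 0 := by rw [hpdef, p_val]; positivity
  have hplog : Nat.log2 p = 127 := by rw [hpdef]; exact p_log2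
  obtain ⟨e1, b1⟩ := hchar a p hp
  obtain ⟨e2, b2⟩ := hchar (a ^^^ clmul k p) p hp
  rw [hplog] at b1 b2
  set u := cldiv a p
  set r1 := clmod a p
  set v := cldiv (a ^^^ clmul k p) p
  set r2 := clmod (a ^^^ clmul k p) p
  have E : (clmul u p ^^^ r1) ^^^ clmul k p = clmul v p ^^^ r2 := by
    rw [← e1]; exact e2
  have E0 : ((clmul u p ^^^ r1) ^^^ clmul k p) ^^^ (clmul v p ^^^ r2) = 0 := by
    rw [E]; exact Nat.xor_self _
  have key : clmul ((u ^^^ k) ^^^ v) p = r1 ^^^ r2 := by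
    rw [← xor_eq_zero_iff, clmul_xor_left, clmul_xor_left, ← E0]
    simp [Nat.xor_assoc, Nat.xor_comm, xor_left_comm, xor_cancel_left]
  have hlt : r1 ^^^ r2 < 2 ^ 127 := Nat.xor_lt_two_pow b1 b2
  rcases eq_or_ne ((u ^^^ k) ^^^ v) 0 with h | h
  · rw [h, clmul_zero] at key
    exact (xor_eq_zero_iff.mp key.symm).symm
  · exfalso
    obtain ⟨lb, _⟩ := clmul_bounds _ p h hp
    rw [hplog] at lb
    have : (2:ℕ) ^ 127 ≤ 2 ^ (Nat.log2 ((u ^^^ k) ^^^ v) + 127) :=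
      Nat.pow_le_pow_right (by norm_num) (by omega)
    omega

/-- Lazy modular reduction is correct: reducing x to
x' = (x mod 2^128) ⊕ ((x div 2^128) ⋆ 4) ⊕ ((x div 2^128) ⋆ 2) preserves the
residue modulo 2^127 ⊕ 2 ⊕ 1. -/
theorem stmt14 (cldiv clmod : ℕ → ℕ → ℕ)
    (hchar : ∀ a b : ℕ, b ≠ 0 →
      a = clmul (cldiv a b) b ^^^ clmod a b ∧ clmod a b < 2 ^ Nat.log2 b)
    (x : ℕ) :
    clmod ((x % 2 ^ 128) ^^^ clmul (x / 2 ^ 128) 4 ^^^ clmul (x / 2 ^ 128) 2)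
        (2 ^ 127 ^^^ 2 ^^^ 1) =
      clmod x (2 ^ 127 ^^^ 2 ^^^ 1) := by
  set q := x / 2 ^ 128 with hq
  have hmul : clmul (2 * q) (2 ^ 127 ^^^ 2 ^^^ 1) =
      2 ^ 128 * q ^^^ clmul q 4 ^^^ clmul q 2 := by
    rw [clmul_two_mul_left, ← clmul_two_mul_right, two_p_val,
      clmul_xor_right, clmul_xor_right, clmul_pow_two_right]
  have hx : x = (x % 2 ^ 128) ^^^ 2 ^ 128 * q := by
    rw [Nat.xor_comm, pow_mul_xor _ (Nat.mod_lt _ (by positivity))]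
    omega
  have hx' : (x % 2 ^ 128) ^^^ clmul q 4 ^^^ clmul q 2 =
      x ^^^ clmul (2 * q) (2 ^ 127 ^^^ 2 ^^^ 1) := by
    rw [hmul]
    conv_rhs => rw [hx]
    simp [Nat.xor_assoc, Nat.xor_comm, xor_left_comm, xor_cancel_left]
  rw [hx']
  exact clmod_xor_multiple cldiv clmod hchar x (2 * q)
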